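/- arXiv:1409.3188 — 3 statements merged into one kernel-verified Lean document; each statement's English description precedes it below -/
import Mathlib

section
/- Let Ξ(y) = θ₃(2y)² / (θ₃(y)·θ₃(4y)) for y > 0 (this is the Belfiore–Solé secrecy function of the 4-modular lattice C⁽⁴⁾ = ℤ ⊕ √2ℤ ⊕ 2ℤ, whose theta series is θ₃(y)θ₃(2y)θ₃(4y), relative to the cubic lattice √2·ℤ³ of equal volume, whose theta series is θ₃(2y)³). Then Ξ is strictly decreasing on (0, 1/2] and strictly increasing on [1/2, ∞); in particular Ξ attains a strict global minimum on (0, ∞) at y = 1/2. Hence the generalized Belfiore–Solé secrecy function conjecture (that the secrecy function of an l-modular lattice attains its global maximum at y = 1/√l) fails for the 4-modular lattice C⁽⁴⁾. -/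
open Real Filter Set

/-- Jacobi theta function θ₂ at purely imaginary argument τ = iy. -/
noncomputable def θ₂ (y : ℝ) : ℝ := ∑' n : ℤ, Real.exp (-Real.pi * ((n : ℝ) + 1/2)^2 * y)

/-- Jacobi theta function θ₃ at purely imaginary argument τ = iy. -/
noncomputable def θ₃ (y : ℝ) : ℝ := ∑' n : ℤ, Real.exp (-Real.pi * (n : ℝ)^2 * y)

/-- Jacobi theta function θ₄ at purely imaginary argument τ = iy. -/
noncomputable def θ₄ (y : ℝ) : ℝ := ∑' n : ℤ, (-1 : ℝ)^n * Real.exp (-Real.pi * (n : ℝ)^2 * y)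

/-- The secrecy function of the 4-modular lattice C⁽⁴⁾ = ℤ ⊕ √2ℤ ⊕ 2ℤ relative to the cubic
lattice of equal volume. -/
noncomputable def Ξ (y : ℝ) : ℝ := θ₃ (2*y)^2 / (θ₃ y * θ₃ (4*y))

set_option maxHeartbeats 1000000




lemma summable_nat_exp (a c : ℝ) (ha : 0 < a) :
    Summable fun n : ℕ => Real.exp (-a * ((n : ℝ) + c) ^ 2) := by
  have hg : Summable fun n : ℕ => Real.exp (-a * (c - 1/4)) * Real.exp (-a) ^ n :=
    (summable_geometric_of_lt_one (Real.exp_pos _).le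
      (Real.exp_lt_one_iff.2 (by linarith))).mul_left _
  refine Summable.of_nonneg_of_le (fun n => (Real.exp_pos _).le) (fun n => ?_) hg
  rw [← Real.exp_nat_mul, ← Real.exp_add]
  apply Real.exp_le_exp.2
  nlinarith [mul_nonneg ha.le (sq_nonneg ((n : ℝ) + c - 1/2))]

lemma summable_int_exp (a c : ℝ) (ha : 0 < a) :
    Summable fun n : ℤ => Real.exp (-a * ((n : ℝ) + c) ^ 2) := by
  refine Summable.of_nat_of_neg_add_one ?_ ?_
  · exact_mod_cast summable_nat_exp a c ha
  · have := summable_nat_exp a (1 - c) ha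
    refine this.congr fun n => ?_
    congr 1
    push_cast
    ring

lemma summable3 {y : ℝ} (hy : 0 < y) :
    Summable fun n : ℤ => Real.exp (-Real.pi * (n : ℝ)^2 * y) := by
  refine (summable_int_exp (Real.pi * y) 0 (by positivity)).congr fun n => ?_
  congr 1; ring

lemma summable2 {y : ℝ} (hy : 0 < y) :
    Summable fun n : ℤ => Real.exp (-Real.pi * ((n : ℝ) + 1/2)^2 * y) := by
  refine (summable_int_exp (Real.pi * y) (1/2) (by positivity)).congr fun n => ?_
  congr 1; ring

lemma θ₃_ge_one {y : ℝ} (hy : 0 < y) : 1 ≤ θ₃ y := by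
  have h := Summable.le_tsum (summable3 hy) 0 (fun j _ => (Real.exp_pos _).le)
  have e0 : Real.exp (-Real.pi * ((0:ℤ) : ℝ)^2 * y) = 1 := by norm_num
  rw [e0] at h
  exact h

lemma θ₃_pos {y : ℝ} (hy : 0 < y) : 0 < θ₃ y := lt_of_lt_of_le one_pos (θ₃_ge_one hy)

lemma θ₂_pos {y : ℝ} (hy : 0 < y) : 0 < θ₂ y :=
  Summable.tsum_pos (summable2 hy) (fun n => (Real.exp_pos _).le) 0 (Real.exp_pos _)

lemma theta3_split {y : ℝ} (hy : 0 < y) : θ₃ y = θ₃ (4*y) + θ₂ (4*y) := by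
  have h4 : 0 < 4*y := by linarith
  have hi1 : Function.Injective (fun n : ℤ => 2*n) := fun a b h => by
    simp only at h; omega
  have hi2 : Function.Injective (fun n : ℤ => 2*n+1) := fun a b h => by
    simp only at h; omega
  have hcompl : IsCompl (Set.range (fun n : ℤ => 2*n)) (Set.range (fun n : ℤ => 2*n+1)) := by
    constructor
    · rw [Set.disjoint_left]
      rintro _ ⟨a, rfl⟩ ⟨b, hb⟩
      simp only at hb
      omega
    · rw [codisjoint_iff_le_sup]
      intro m _
      simp only [Set.sup_eq_union, Set.mem_union, Set.mem_range]
      rcases Int.even_or_odd m with ⟨k, hk⟩ | ⟨k, hk⟩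
      · exact Or.inl ⟨k, by omega⟩
      · exact Or.inr ⟨k, by omega⟩
  have h1 : HasSum ((fun n : ℤ => Real.exp (-π * (n:ℝ)^2 * y)) ∘ (fun n : ℤ => 2*n)) (θ₃ (4*y)) := by
    have hfe : ((fun n : ℤ => Real.exp (-π * (n:ℝ)^2 * y)) ∘ (fun n : ℤ => 2*n))
        = fun n : ℤ => Real.exp (-π * (n:ℝ)^2 * (4*y)) := by
      funext n; simp only [Function.comp]; congr 1; push_cast; ring
    rw [hfe]; exact (summable3 h4).hasSum
  have h2 : HasSum ((fun n : ℤ => Real.exp (-π * (n:ℝ)^2 * y)) ∘ (fun n : ℤ => 2*n+1)) (θ₂ (4*y)) := by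
    have hfe : ((fun n : ℤ => Real.exp (-π * (n:ℝ)^2 * y)) ∘ (fun n : ℤ => 2*n+1))
        = fun n : ℤ => Real.exp (-π * ((n:ℝ)+1/2)^2 * (4*y)) := by
      funext n; simp only [Function.comp]; congr 1; push_cast; ring
    rw [hfe]; exact (summable2 h4).hasSum
  exact (HasSum.add_isCompl hcompl (hi1.hasSum_range_iff.mpr h1)
    (hi2.hasSum_range_iff.mpr h2)).tsum_eq

lemma norm_summable3 {t : ℝ} (ht : 0 < t) :
    Summable fun n : ℤ => ‖Real.exp (-Real.pi * (n : ℝ)^2 * t)‖ :=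
  (summable3 ht).congr fun n => by rw [Real.norm_eq_abs, abs_of_pos (Real.exp_pos _)]

lemma norm_summable2 {t : ℝ} (ht : 0 < t) :
    Summable fun n : ℤ => ‖Real.exp (-Real.pi * ((n : ℝ)+1/2)^2 * t)‖ :=
  (summable2 ht).congr fun n => by rw [Real.norm_eq_abs, abs_of_pos (Real.exp_pos _)]

lemma theta3_sq_hasSum {t : ℝ} (ht : 0 < t) :
    HasSum (fun p : ℤ×ℤ => Real.exp (-π * (p.1:ℝ)^2 * t) * Real.exp (-π * (p.2:ℝ)^2 * t))
      (θ₃ t ^ 2) := by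
  have key : θ₃ t * θ₃ t
      = ∑' p : ℤ×ℤ, Real.exp (-π * (p.1:ℝ)^2 * t) * Real.exp (-π * (p.2:ℝ)^2 * t) :=
    tsum_mul_tsum_of_summable_norm (norm_summable3 ht) (norm_summable3 ht)
  rw [pow_two, key]
  exact ((summable3 ht).mul_of_nonneg (summable3 ht)
    (fun n => (Real.exp_pos _).le) (fun n => (Real.exp_pos _).le)).hasSum

lemma theta2_sq_hasSum {t : ℝ} (ht : 0 < t) :
    HasSum (fun p : ℤ×ℤ => Real.exp (-π * ((p.1:ℝ)+1/2)^2 * t) * Real.exp (-π * ((p.2:ℝ)+1/2)^2 * t))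
      (θ₂ t ^ 2) := by
  have key : θ₂ t * θ₂ t
      = ∑' p : ℤ×ℤ, Real.exp (-π * ((p.1:ℝ)+1/2)^2 * t) * Real.exp (-π * ((p.2:ℝ)+1/2)^2 * t) :=
    tsum_mul_tsum_of_summable_norm (norm_summable2 ht) (norm_summable2 ht)
  rw [pow_two, key]
  exact ((summable2 ht).mul_of_nonneg (summable2 ht)
    (fun n => (Real.exp_pos _).le) (fun n => (Real.exp_pos _).le)).hasSum

lemma theta_sq_split {t : ℝ} (ht : 0 < t) : θ₃ t ^ 2 = θ₃ (2*t) ^ 2 + θ₂ (2*t) ^ 2 := by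
  have h2t : 0 < 2*t := by linarith
  set F : ℤ×ℤ → ℝ := fun p => Real.exp (-π * (p.1:ℝ)^2 * t) * Real.exp (-π * (p.2:ℝ)^2 * t) with hF
  have hi1 : Function.Injective (fun p : ℤ×ℤ => (p.1+p.2, p.1-p.2)) := by
    rintro ⟨a1,a2⟩ ⟨b1,b2⟩ h
    simp only [Prod.mk.injEq] at h ⊢
    omega
  have hi2 : Function.Injective (fun p : ℤ×ℤ => (p.1+p.2+1, p.1-p.2)) := by
    rintro ⟨a1,a2⟩ ⟨b1,b2⟩ h
    simp only [Prod.mk.injEq] at h ⊢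
    omega
  have hcompl : IsCompl (Set.range (fun p : ℤ×ℤ => (p.1+p.2, p.1-p.2)))
      (Set.range (fun p : ℤ×ℤ => (p.1+p.2+1, p.1-p.2))) := by
    constructor
    · rw [Set.disjoint_left]
      rintro _ ⟨a, rfl⟩ ⟨b, hb⟩
      simp only [Prod.mk.injEq] at hb
      omega
    · rw [codisjoint_iff_le_sup]
      rintro ⟨p1, p2⟩ _
      simp only [Set.sup_eq_union, Set.mem_union, Set.mem_range]
      rcases Int.even_or_odd (p1 + p2) with ⟨a, ha⟩ | ⟨a, ha⟩
      · exact Or.inl ⟨(a, p1 - a), by simp only [Prod.mk.injEq]; omega⟩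
      · exact Or.inr ⟨(a, p1 - 1 - a), by simp only [Prod.mk.injEq]; omega⟩
  have h1 : HasSum (F ∘ (fun p : ℤ×ℤ => (p.1+p.2, p.1-p.2))) (θ₃ (2*t) ^ 2) := by
    have hfe : (F ∘ (fun p : ℤ×ℤ => (p.1+p.2, p.1-p.2)))
        = fun p : ℤ×ℤ => Real.exp (-π * (p.1:ℝ)^2 * (2*t)) * Real.exp (-π * (p.2:ℝ)^2 * (2*t)) := by
      funext p
      simp only [Function.comp, hF]
      rw [← Real.exp_add, ← Real.exp_add]
      congr 1
      push_cast
      ring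
    rw [hfe]; exact theta3_sq_hasSum h2t
  have h2 : HasSum (F ∘ (fun p : ℤ×ℤ => (p.1+p.2+1, p.1-p.2))) (θ₂ (2*t) ^ 2) := by
    have hfe : (F ∘ (fun p : ℤ×ℤ => (p.1+p.2+1, p.1-p.2)))
        = fun p : ℤ×ℤ => Real.exp (-π * ((p.1:ℝ)+1/2)^2 * (2*t)) * Real.exp (-π * ((p.2:ℝ)+1/2)^2 * (2*t)) := by
      funext p
      simp only [Function.comp, hF]
      rw [← Real.exp_add, ← Real.exp_add]
      congr 1
      push_cast
      ring
    rw [hfe]; exact theta2_sq_hasSum h2t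
  exact (theta3_sq_hasSum ht).unique
    (HasSum.add_isCompl hcompl (hi1.hasSum_range_iff.mpr h1) (hi2.hasSum_range_iff.mpr h2))

lemma theta3_complex {t : ℝ} (ht : 0 < t) : jacobiTheta ((t:ℂ) * Complex.I) = (θ₃ t : ℂ) := by
  rw [jacobiTheta, θ₃, Complex.ofReal_tsum]
  apply tsum_congr
  intro n
  rw [Complex.ofReal_exp]
  congr 1
  push_cast
  linear_combination (↑Real.pi * (n:ℂ)^2 * t) * Complex.I_sq

lemma theta3_inv {t : ℝ} (ht : 0 < t) : θ₃ (1/t) = Real.sqrt t * θ₃ t := by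
  have htC : (t:ℂ) ≠ 0 := by exact_mod_cast ht.ne'
  have hτ : (0:ℝ) < ((t:ℂ) * Complex.I).im := by simp [ht]
  have hS := jacobiTheta_S_smul ⟨(t:ℂ) * Complex.I, hτ⟩
  rw [UpperHalfPlane.modular_S_smul] at hS
  have h1 : (-((t:ℂ) * Complex.I))⁻¹ = ((1/t : ℝ):ℂ) * Complex.I := by
    rw [inv_eq_of_mul_eq_one_right]
    push_cast
    field_simp
    linear_combination (-1:ℂ) * Complex.I_sq
  have h2 : -Complex.I * ((t:ℂ) * Complex.I) = (t:ℂ) := by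
    linear_combination -(t:ℂ) * Complex.I_sq
  have hS' : jacobiTheta ((-((t:ℂ) * Complex.I))⁻¹)
      = (-Complex.I * ((t:ℂ) * Complex.I)) ^ ((1:ℂ)/2) * jacobiTheta ((t:ℂ) * Complex.I) := hS
  rw [h1, h2, theta3_complex ht, theta3_complex (by positivity : (0:ℝ) < 1/t)] at hS'
  rename' hS' => hS
  have h3 : ((t:ℂ)) ^ ((1:ℂ)/2) = ((Real.sqrt t : ℝ) : ℂ) := by
    rw [Real.sqrt_eq_rpow]
    rw [Complex.ofReal_cpow ht.le]
    norm_num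
  rw [h3] at hS
  exact_mod_cast hS

lemma theta2_two : θ₂ 2 = (Real.sqrt 2 - 1) * θ₃ 2 := by
  have h := theta3_split (y := 1/2) (by norm_num)
  have h2 := theta3_inv (t := 2) (by norm_num)
  norm_num at h h2
  linarith

lemma Xi_symm {y : ℝ} (hy : 0 < y) : Ξ (1/(4*y)) = Ξ y := by
  rw [Ξ, Ξ]
  have e1 : 2 * (1/(4*y)) = 1/(2*y) := by
    field_simp
    ring
  have e2 : 4 * (1/(4*y)) = 1/y := by
    field_simp
  rw [e1, e2, theta3_inv (by positivity : (0:ℝ) < 2*y), theta3_inv hy,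
    theta3_inv (by positivity : (0:ℝ) < 4*y)]
  have h2y : Real.sqrt (2*y) ^ 2 = 2*y := Real.sq_sqrt (by linarith)
  have h4y : Real.sqrt (4*y) * Real.sqrt y = 2 * y := by
    rw [← Real.sqrt_mul (by linarith)]
    rw [(by ring : 4*y*y = (2*y)^2), Real.sqrt_sq (by linarith)]
  rw [mul_pow, h2y]
  rw [(by ring : (Real.sqrt (4*y) * θ₃ (4*y)) * (Real.sqrt y * θ₃ y)
      = (Real.sqrt (4*y) * Real.sqrt y) * (θ₃ (4*y) * θ₃ y)), h4y]
  rw [mul_div_mul_left _ _ (by linarith : 2*y ≠ 0)]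
  rw [mul_comm (θ₃ (4*y)) (θ₃ y)]

lemma sq_add_one_le_three_pow (m : ℕ) : ((m:ℝ))^2 + 1 ≤ 3^m := by
  induction m with
  | zero => norm_num
  | succ k ih =>
    have hk : (0:ℝ) ≤ (k:ℝ) := Nat.cast_nonneg k
    push_cast [pow_succ]
    push_cast at ih
    nlinarith [sq_nonneg ((k:ℝ) - 1)]

lemma bern (m : ℕ) {x : ℝ} (h0 : 0 ≤ x) (h1 : x ≤ 1) : 1 - x^m ≤ m * (1-x) := by
  induction m with
  | zero => norm_num
  | succ k ih =>
    have hp : x^k ≤ 1 := pow_le_one₀ h0 h1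
    have hpn : 0 ≤ x^k := pow_nonneg h0 k
    push_cast [pow_succ]
    push_cast at ih
    nlinarith

lemma exp_six : (27:ℝ) ≤ Real.exp 6 := by
  have h2 : (3:ℝ) ≤ Real.exp 2 := by linarith [Real.add_one_le_exp (2:ℝ)]
  have h : Real.exp 6 = (Real.exp 2)^3 := by
    rw [← Real.exp_nat_mul]
    norm_num
  rw [h]
  calc (27:ℝ) = 3^3 := by norm_num
  _ ≤ (Real.exp 2)^3 := pow_le_pow_left₀ (by norm_num) h2 3

lemma q_small : 3 * Real.exp (-6) ≤ 1/9 := by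
  rw [Real.exp_neg]
  rw [mul_comm, inv_mul_le_iff₀ (by positivity)]
  nlinarith [exp_six]

lemma term_bound {t : ℝ} (ht : 2 ≤ t) (m : ℕ) :
    ((m:ℝ))^2 * Real.exp (-Real.pi * ((m:ℝ))^2 * t) ≤ (3 * Real.exp (-6))^m := by
  have hpi : (3:ℝ) ≤ Real.pi := by linarith [Real.pi_gt_three]
  have h1 : ((m:ℝ))^2 ≤ 3^m := by nlinarith [sq_add_one_le_three_pow m]
  have h2 : Real.exp (-Real.pi * ((m:ℝ))^2 * t) ≤ Real.exp (-6) ^ m := by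
    rw [← Real.exp_nat_mul]
    apply Real.exp_le_exp.2
    have hm : (0:ℝ) ≤ (m:ℝ) := Nat.cast_nonneg m
    have hmsq : (m:ℝ) ≤ (m:ℝ)^2 := by exact_mod_cast Nat.le_self_pow (by norm_num) m
    have hπt : (6:ℝ) ≤ Real.pi * t := by nlinarith
    nlinarith [mul_le_mul_of_nonneg_right hπt (sq_nonneg (m:ℝ))]
  calc ((m:ℝ))^2 * Real.exp (-Real.pi * ((m:ℝ))^2 * t)
      ≤ 3^m * (Real.exp (-6))^m :=
        mul_le_mul h1 h2 (Real.exp_pos _).le (by positivity)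
  _ = (3 * Real.exp (-6))^m := (mul_pow _ _ _).symm

lemma summable_sq_exp {t : ℝ} (ht : 2 ≤ t) :
    Summable fun n : ℤ => (n:ℝ)^2 * Real.exp (-Real.pi * (n:ℝ)^2 * t) := by
  have hq0 : (0:ℝ) ≤ 3 * Real.exp (-6) := by positivity
  have hq1 : 3 * Real.exp (-6) < 1 := lt_of_le_of_lt q_small (by norm_num)
  have hgeo : Summable fun m : ℕ => (3 * Real.exp (-6))^m := summable_geometric_of_lt_one hq0 hq1
  refine Summable.of_nat_of_neg_add_one ?_ ?_
  · refine Summable.of_nonneg_of_le (fun m => by positivity) (fun m => ?_) hgeo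
    exact_mod_cast term_bound ht m
  · refine Summable.of_nonneg_of_le (fun m => by positivity) (fun m => ?_) hgeo
    have h := term_bound ht (m+1)
    have hq : (3 * Real.exp (-6))^(m+1) ≤ (3 * Real.exp (-6))^m :=
      pow_le_pow_of_le_one hq0 hq1.le (Nat.le_succ m)
    refine le_trans ?_ (le_trans h hq)
    apply le_of_eq
    push_cast
    ring_nf

lemma geom_tail_le {q : ℝ} (hq0 : 0 ≤ q) (hq9 : q ≤ 1/9) : ∑' n : ℕ, q^(n+1) ≤ 1/8 := by
  have hq1 : q < 1 := by linarith
  have h : (fun n : ℕ => q^(n+1)) = fun n : ℕ => q * q^n := by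
    funext n; rw [pow_succ']
  rw [h, tsum_mul_left, tsum_geometric_of_lt_one hq0 hq1]
  have hpos : 0 < 1 - q := by linarith
  rw [← div_eq_mul_inv, div_le_iff₀ hpos]
  linarith

lemma sum_sq_exp_le {t : ℝ} (ht : 2 ≤ t) :
    ∑' n : ℤ, (n:ℝ)^2 * Real.exp (-Real.pi * (n:ℝ)^2 * t) ≤ 1/4 := by
  have hq0 : (0:ℝ) ≤ 3 * Real.exp (-6) := by positivity
  have hq1 : 3 * Real.exp (-6) < 1 := lt_of_le_of_lt q_small (by norm_num)
  have hgeo : Summable fun m : ℕ => (3 * Real.exp (-6))^m := summable_geometric_of_lt_one hq0 hq1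
  have hgeo' : Summable fun m : ℕ => (3 * Real.exp (-6))^(m+1) := by
    have h : (fun n : ℕ => (3 * Real.exp (-6))^(n+1))
        = fun n : ℕ => (3*Real.exp (-6)) * (3*Real.exp (-6))^n := by
      funext n; rw [pow_succ']
    rw [h]; exact hgeo.mul_left _
  have hG : Summable fun m : ℕ => ((m:ℝ))^2 * Real.exp (-Real.pi * ((m:ℝ))^2 * t) :=
    Summable.of_nonneg_of_le (fun m => by positivity) (fun m => term_bound ht m) hgeo
  have hG1 : Summable fun m : ℕ => (((m+1:ℕ)):ℝ)^2 * Real.exp (-Real.pi * (((m+1:ℕ)):ℝ)^2 * t) :=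
    (summable_nat_add_iff 1).2 hG
  have hG1le : ∑' m : ℕ, (((m+1:ℕ)):ℝ)^2 * Real.exp (-Real.pi * (((m+1:ℕ)):ℝ)^2 * t) ≤ 1/8 :=
    le_trans (Summable.tsum_le_tsum (fun m => term_bound ht (m+1)) hG1 hgeo') (geom_tail_le hq0 q_small)
  have hcast1 : ∀ m : ℕ, (((m:ℤ)):ℝ)^2 * Real.exp (-Real.pi * (((m:ℤ)):ℝ)^2 * t)
      = ((m:ℝ))^2 * Real.exp (-Real.pi * ((m:ℝ))^2 * t) := by
    intro m; push_cast; ring_nf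
  have hcast2 : ∀ m : ℕ, (((-((m:ℤ)+1) : ℤ)):ℝ)^2 * Real.exp (-Real.pi * (((-((m:ℤ)+1) : ℤ)):ℝ)^2 * t)
      = (((m+1:ℕ)):ℝ)^2 * Real.exp (-Real.pi * (((m+1:ℕ)):ℝ)^2 * t) := by
    intro m; push_cast; ring_nf
  have hnat : Summable fun m : ℕ => (((m:ℤ)):ℝ)^2 * Real.exp (-Real.pi * (((m:ℤ)):ℝ)^2 * t) :=
    hG.congr (fun m => (hcast1 m).symm)
  have hneg : Summable fun m : ℕ => (((-((m:ℤ)+1) : ℤ)):ℝ)^2 * Real.exp (-Real.pi * (((-((m:ℤ)+1) : ℤ)):ℝ)^2 * t) :=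
    hG1.congr (fun m => (hcast2 m).symm)
  rw [tsum_of_nat_of_neg_add_one hnat hneg]
  have hA : ∑' m : ℕ, (((m:ℤ)):ℝ)^2 * Real.exp (-Real.pi * (((m:ℤ)):ℝ)^2 * t) ≤ 1/8 := by
    rw [tsum_congr hcast1, Summable.tsum_eq_zero_add hG]
    simp only [Nat.cast_zero]
    norm_num
    exact le_trans (le_of_eq (tsum_congr (fun m => by push_cast; ring_nf))) hG1le
  have hB : ∑' m : ℕ, (((-((m:ℤ)+1) : ℤ)):ℝ)^2 * Real.exp (-Real.pi * (((-((m:ℤ)+1) : ℤ)):ℝ)^2 * t) ≤ 1/8 := by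
    rw [tsum_congr hcast2]
    exact hG1le
  linarith

lemma one_sub_exp_lt {x : ℝ} (hx : 0 < x) : 1 - Real.exp (-x) < Real.exp x - 1 := by
  have ha := Real.add_one_le_exp (-x)
  have hb := Real.add_one_lt_exp (by linarith : x ≠ 0)
  linarith

lemma theta3_ratio {t₁ t₂ : ℝ} (h1 : 2 ≤ t₁) (h2 : t₁ < t₂) :
    θ₃ t₁ < Real.exp (Real.pi * (t₂ - t₁) / 4) * θ₃ t₂ := by
  have ht₁ : 0 < t₁ := by linarith
  have ht₂ : 0 < t₂ := by linarith
  have hδ : 0 < t₂ - t₁ := by linarith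
  set x := Real.pi * (t₂ - t₁) / 4 with hxdef
  have hx : 0 < x := by positivity
  have hexp1 : Real.exp (-x) ≤ 1 := by
    have h := Real.exp_le_exp.2 (by linarith : -x ≤ 0)
    rwa [Real.exp_zero] at h
  have hterm : ∀ n : ℤ, Real.exp (-Real.pi * (n:ℝ)^2 * t₁) - Real.exp (-Real.pi * (n:ℝ)^2 * t₂)
      ≤ (4 * (1 - Real.exp (-x))) * ((n:ℝ)^2 * Real.exp (-Real.pi * (n:ℝ)^2 * t₁)) := by
    intro n
    have hsplit : Real.exp (-Real.pi * (n:ℝ)^2 * t₂)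
        = Real.exp (-Real.pi * (n:ℝ)^2 * t₁) * Real.exp (-Real.pi * (n:ℝ)^2 * (t₂ - t₁)) := by
      rw [← Real.exp_add]; congr 1; ring
    have hm : ((4 * n.natAbs^2 : ℕ):ℝ) = 4 * (n:ℝ)^2 := by
      push_cast [Nat.cast_natAbs]
      rw [sq_abs]
    have hexp : Real.exp (-Real.pi * (n:ℝ)^2 * (t₂ - t₁))
        = Real.exp (-x) ^ (4 * n.natAbs^2 : ℕ) := by
      rw [← Real.exp_nat_mul, hm, hxdef]
      congr 1
      ring
    have hb := bern (4 * n.natAbs^2) (Real.exp_pos (-x)).le hexp1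
    calc Real.exp (-Real.pi * (n:ℝ)^2 * t₁) - Real.exp (-Real.pi * (n:ℝ)^2 * t₂)
        = Real.exp (-Real.pi * (n:ℝ)^2 * t₁) * (1 - Real.exp (-x) ^ (4 * n.natAbs^2 : ℕ)) := by
          rw [hsplit, hexp]; ring
    _ ≤ Real.exp (-Real.pi * (n:ℝ)^2 * t₁) * (((4 * n.natAbs^2 : ℕ):ℝ) * (1 - Real.exp (-x))) :=
          mul_le_mul_of_nonneg_left hb (Real.exp_pos _).le
    _ = (4 * (1 - Real.exp (-x))) * ((n:ℝ)^2 * Real.exp (-Real.pi * (n:ℝ)^2 * t₁)) := by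
          rw [hm]; ring
  have hsub : θ₃ t₁ - θ₃ t₂
      = ∑' n : ℤ, (Real.exp (-Real.pi * (n:ℝ)^2 * t₁) - Real.exp (-Real.pi * (n:ℝ)^2 * t₂)) :=
    (Summable.tsum_sub (summable3 ht₁) (summable3 ht₂)).symm
  have hco : (0:ℝ) ≤ 4 * (1 - Real.exp (-x)) := by linarith
  have hsumle : ∑' n : ℤ, (Real.exp (-Real.pi * (n:ℝ)^2 * t₁) - Real.exp (-Real.pi * (n:ℝ)^2 * t₂))
      ≤ (4 * (1 - Real.exp (-x))) * (1/4) := by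
    calc ∑' n : ℤ, (Real.exp (-Real.pi * (n:ℝ)^2 * t₁) - Real.exp (-Real.pi * (n:ℝ)^2 * t₂))
        ≤ ∑' n : ℤ, (4 * (1 - Real.exp (-x))) * ((n:ℝ)^2 * Real.exp (-Real.pi * (n:ℝ)^2 * t₁)) :=
          Summable.tsum_le_tsum hterm ((summable3 ht₁).sub (summable3 ht₂))
            ((summable_sq_exp h1).mul_left _)
    _ = (4 * (1 - Real.exp (-x))) * ∑' n : ℤ, ((n:ℝ)^2 * Real.exp (-Real.pi * (n:ℝ)^2 * t₁)) :=
          tsum_mul_left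
    _ ≤ _ := mul_le_mul_of_nonneg_left (sum_sq_exp_le h1) hco
  have h3 := θ₃_ge_one ht₂
  have hlt := one_sub_exp_lt hx
  have hex1 : (1:ℝ) < Real.exp x := by nlinarith [Real.add_one_lt_exp (ne_of_gt hx)]
  have hfin : (Real.exp x - 1) * 1 ≤ (Real.exp x - 1) * θ₃ t₂ :=
    mul_le_mul_of_nonneg_left h3 (by linarith)
  nlinarith [hsub, hsumle]

noncomputable def Nf (t : ℝ) : ℝ := ∑' n : ℤ, Real.exp (-Real.pi * ((n:ℝ)^2 + (n:ℝ)) * t)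

lemma summableN {t : ℝ} (ht : 0 < t) :
    Summable fun n : ℤ => Real.exp (-Real.pi * ((n:ℝ)^2 + (n:ℝ)) * t) :=
  ((summable2 ht).mul_right (Real.exp (Real.pi * t / 4))).congr fun n => by
    rw [← Real.exp_add]; congr 1; ring

lemma theta2_eq {t : ℝ} (ht : 0 < t) : θ₂ t = Real.exp (-Real.pi * t / 4) * Nf t := by
  rw [θ₂, Nf, ← tsum_mul_left]
  exact tsum_congr fun n => by rw [← Real.exp_add]; congr 1; ring

lemma N_pos {t : ℝ} (ht : 0 < t) : 0 < Nf t :=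
  Summable.tsum_pos (summableN ht) (fun n => (Real.exp_pos _).le) 0 (Real.exp_pos _)

lemma N_mono {t₁ t₂ : ℝ} (h0 : 0 < t₁) (h : t₁ ≤ t₂) : Nf t₂ ≤ Nf t₁ := by
  refine Summable.tsum_le_tsum (fun n => ?_) (summableN (lt_of_lt_of_le h0 h)) (summableN h0)
  apply Real.exp_le_exp.2
  have hn : 0 ≤ (n:ℝ)^2 + (n:ℝ) := by
    rcases le_or_gt 0 n with hh | hh
    · have h' : (0:ℝ) ≤ (n:ℝ) := by exact_mod_cast hh
      nlinarith
    · have h' : (n:ℝ) ≤ -1 := by exact_mod_cast (by omega : n ≤ -1)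
      nlinarith
  nlinarith [mul_nonneg (mul_nonneg Real.pi_pos.le hn) (by linarith : (0:ℝ) ≤ t₂ - t₁)]

lemma theta_cross {t₁ t₂ : ℝ} (h1 : 2 ≤ t₁) (h2 : t₁ < t₂) :
    θ₂ t₂ * θ₃ t₁ < θ₂ t₁ * θ₃ t₂ := by
  have ht₁ : 0 < t₁ := by linarith
  have ht₂ : 0 < t₂ := by linarith
  rw [theta2_eq ht₁, theta2_eq ht₂]
  have hr := theta3_ratio h1 h2
  have hN : Nf t₂ ≤ Nf t₁ := N_mono ht₁ h2.le
  have hN2 : 0 < Nf t₂ := N_pos ht₂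
  have h3 : 0 < θ₃ t₂ := θ₃_pos ht₂
  have key : Real.exp (-Real.pi * t₂ / 4) * Real.exp (Real.pi * (t₂ - t₁)/4)
      = Real.exp (-Real.pi * t₁/4) := by
    rw [← Real.exp_add]; congr 1; ring
  calc Real.exp (-Real.pi*t₂/4) * Nf t₂ * θ₃ t₁
      < Real.exp (-Real.pi*t₂/4) * Nf t₂ * (Real.exp (Real.pi*(t₂-t₁)/4) * θ₃ t₂) := by
        apply mul_lt_mul_of_pos_left hr (by positivity)
  _ = (Real.exp (-Real.pi*t₂/4) * Real.exp (Real.pi*(t₂-t₁)/4)) * (Nf t₂ * θ₃ t₂) := by ring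
  _ = Real.exp (-Real.pi*t₁/4) * (Nf t₂ * θ₃ t₂) := by rw [key]
  _ ≤ Real.exp (-Real.pi*t₁/4) * (Nf t₁ * θ₃ t₂) :=
        mul_le_mul_of_nonneg_left (mul_le_mul_of_nonneg_right hN h3.le) (Real.exp_pos _).le
  _ = Real.exp (-Real.pi*t₁/4) * Nf t₁ * θ₃ t₂ := by ring

lemma Xi_val {y : ℝ} (hy : 0 < y) :
    Ξ y = (1 + (θ₂ (4*y) / θ₃ (4*y))^2) / (1 + θ₂ (4*y) / θ₃ (4*y)) := by
  have h4 : 0 < 4*y := by linarith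
  have h2y : 0 < 2*y := by linarith
  have hb := θ₃_pos h4
  have ha := θ₂_pos h4
  have hy3 := θ₃_pos hy
  have hsq := theta_sq_split h2y
  have e : 2*(2*y) = 4*y := by ring
  rw [e] at hsq
  have hsplit := theta3_split hy
  have hb' : θ₃ (4*y) ≠ 0 := ne_of_gt hb
  have hba : θ₃ (4*y) + θ₂ (4*y) ≠ 0 := by positivity
  rw [Ξ, hsq, hsplit]
  field_simp

lemma sqrt2_lemmas : 1 < Real.sqrt 2 ∧ Real.sqrt 2 ^ 2 = 2 := by
  have hs : Real.sqrt 2 ^ 2 = 2 := Real.sq_sqrt (by norm_num)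
  constructor
  · nlinarith [Real.sqrt_nonneg 2]
  · exact hs

lemma r_le {t : ℝ} (ht : 2 ≤ t) : θ₂ t / θ₃ t ≤ Real.sqrt 2 - 1 := by
  have htp : 0 < t := by linarith
  have h3 := θ₃_pos htp
  have h32 := θ₃_pos (by norm_num : (0:ℝ) < 2)
  rcases eq_or_lt_of_le ht with h | h
  · rw [← h, theta2_two]
    rw [mul_div_assoc, div_self (ne_of_gt h32), mul_one]
  · have hc := theta_cross (le_refl 2) h
    rw [theta2_two] at hc
    rw [div_le_iff₀ h3]
    have h' : θ₂ t * θ₃ 2 < (Real.sqrt 2 - 1) * θ₃ t * θ₃ 2 := by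
      calc θ₂ t * θ₃ 2 < (Real.sqrt 2 - 1) * θ₃ 2 * θ₃ t := hc
      _ = (Real.sqrt 2 - 1) * θ₃ t * θ₃ 2 := by ring
    exact ((mul_lt_mul_iff_of_pos_right h32).1 h').le

lemma Xi_strictMonoOn : StrictMonoOn Ξ (Set.Ici (1/2 : ℝ)) := by
  rintro y₁ h₁ y₂ h₂ hlt
  rw [Set.mem_Ici] at h₁ h₂
  have hy₁ : 0 < y₁ := by linarith
  have hy₂ : 0 < y₂ := by linarith
  have h41 : (2:ℝ) ≤ 4*y₁ := by linarith
  have hb₁ := θ₃_pos (by linarith : (0:ℝ) < 4*y₁)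
  have hb₂ := θ₃_pos (by linarith : (0:ℝ) < 4*y₂)
  have ha₁ := θ₂_pos (by linarith : (0:ℝ) < 4*y₁)
  have ha₂ := θ₂_pos (by linarith : (0:ℝ) < 4*y₂)
  have hcross := theta_cross h41 (by linarith : 4*y₁ < 4*y₂)
  rw [Xi_val hy₁, Xi_val hy₂]
  set r₁ := θ₂ (4*y₁) / θ₃ (4*y₁) with hr₁
  set r₂ := θ₂ (4*y₂) / θ₃ (4*y₂) with hr₂
  have hr2r1 : r₂ < r₁ := by
    rw [hr₁, hr₂, div_lt_div_iff₀ hb₂ hb₁]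
    exact hcross
  have hr1le : r₁ ≤ Real.sqrt 2 - 1 := r_le h41
  have hr2pos : 0 < r₂ := div_pos ha₂ hb₂
  obtain ⟨hs1, hs2⟩ := sqrt2_lemmas
  have h1r1 : 0 < 1 + r₁ := by nlinarith
  have h1r2 : 0 < 1 + r₂ := by nlinarith
  rw [div_lt_div_iff₀ h1r1 h1r2]
  have hkey : r₁ + r₂ + r₁*r₂ < 1 := by
    have hx1 : r₂ < Real.sqrt 2 - 1 := lt_of_lt_of_le hr2r1 hr1le
    have hx2 : r₁ * r₂ < (Real.sqrt 2 - 1) * (Real.sqrt 2 - 1) :=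
      mul_lt_mul' hr1le hx1 hr2pos.le (by nlinarith)
    nlinarith
  nlinarith [mul_pos (sub_pos.2 hr2r1) (sub_pos.2 hkey)]

lemma half_mem_Ici : (1/2 : ℝ) ∈ Set.Ici (1/2 : ℝ) := Set.mem_Ici.2 le_rfl

lemma inv4_ge {y : ℝ} (h0 : 0 < y) (h1 : y ≤ 1/2) : 1/2 ≤ 1/(4*y) := by
  rw [div_le_div_iff₀ (by norm_num) (by linarith)]
  linarith

lemma Xi_strictAntiOn : StrictAntiOn Ξ (Set.Ioc 0 (1/2 : ℝ)) := by
  rintro y₁ ⟨h0₁, h1₁⟩ y₂ ⟨h0₂, h1₂⟩ hlt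
  rw [← Xi_symm h0₁, ← Xi_symm h0₂]
  have hm₂ : 1/2 ≤ 1/(4*y₂) := inv4_ge h0₂ h1₂
  have hm₁ : 1/2 ≤ 1/(4*y₁) := inv4_ge h0₁ h1₁
  have hlt' : 1/(4*y₂) < 1/(4*y₁) := by
    rw [div_lt_div_iff₀ (by linarith) (by linarith)]
    linarith
  exact Xi_strictMonoOn (Set.mem_Ici.2 hm₂) (Set.mem_Ici.2 hm₁) hlt'

lemma Xi_min {y : ℝ} (hy : 0 < y) (hne : y ≠ 1/2) : Ξ (1/2) < Ξ y := by
  rcases lt_or_gt_of_ne hne with h | h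
  · rw [← Xi_symm hy]
    have hm : 1/2 < 1/(4*y) := by
      rw [div_lt_div_iff₀ (by norm_num) (by linarith)]
      linarith
    exact Xi_strictMonoOn half_mem_Ici (Set.mem_Ici.2 hm.le) hm
  · exact Xi_strictMonoOn half_mem_Ici (Set.mem_Ici.2 h.le) h

/-- The secrecy function Ξ of C⁽⁴⁾ is strictly decreasing on (0, 1/2], strictly increasing on
[1/2, ∞), attains a strict global minimum on (0,∞) at y = 1/2, and hence the generalized
Belfiore–Solé conjecture (global maximum at y = 1/√4 = 1/2) fails for C⁽⁴⁾. -/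
theorem C4_counterexample :
    StrictAntiOn Ξ (Set.Ioc 0 (1/2)) ∧
    StrictMonoOn Ξ (Set.Ici (1/2)) ∧
    (∀ y : ℝ, 0 < y → y ≠ 1/2 → Ξ (1/2) < Ξ y) ∧
    ¬ (∀ y : ℝ, 0 < y → Ξ y ≤ Ξ (1/2)) := by
  refine ⟨Xi_strictAntiOn, Xi_strictMonoOn, fun y hy hne => Xi_min hy hne, fun h => ?_⟩
  have h1 := h 1 one_pos
  have h2 := Xi_min one_pos (by norm_num)
  linarith
end

section
/- For y > 0, one has θ₂(y) = θ₄(y) if and only if y = 1. -/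
open Real Filter Set

section Aux
open Complex

lemma term2 (y : ℝ) (n : ℤ) :
    jacobiTheta₂_term n (I*y/2) (I*y)
      = ((Real.exp (Real.pi*y/4) * Real.exp (-Real.pi * ((n : ℝ) + 1/2)^2 * y) : ℝ) : ℂ) := by
  rw [jacobiTheta₂_term, ← Real.exp_add, Complex.ofReal_exp]
  congr 1
  push_cast
  ring_nf
  simp only [Complex.I_sq]
  ring

lemma term4 (y : ℝ) (n : ℤ) :
    jacobiTheta₂_term n (1/2) (I*y)
      = (((-1 : ℝ)^n * Real.exp (-Real.pi * (n : ℝ)^2 * y) : ℝ) : ℂ) := by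
  rw [jacobiTheta₂_term]
  have : (2 * ↑Real.pi * I * n * (1/2 : ℂ) + ↑Real.pi * I * n ^ 2 * (I*y))
      = n * (Real.pi * I) + ((-Real.pi * (n:ℝ)^2 * y : ℝ) : ℂ) := by
    push_cast; ring_nf; simp [Complex.I_sq]; ring
  rw [this, Complex.exp_add, Complex.exp_int_mul, Complex.exp_pi_mul_I]
  push_cast
  ring

lemma sum2 (y : ℝ) (hy : 0 < y) :
    Summable (fun n : ℤ => Real.exp (-Real.pi * ((n : ℝ) + 1/2)^2 * y)) := by
  have h : Summable (fun n : ℤ => jacobiTheta₂_term n (I*y/2) (I*y)) := by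
    rw [summable_jacobiTheta₂_term_iff]
    simpa using hy
  simp_rw [term2] at h
  rw [Complex.summable_ofReal] at h
  have := h.mul_left (Real.exp (Real.pi*y/4))⁻¹
  simpa [← mul_assoc, Real.exp_ne_zero] using this

lemma sum4 (y : ℝ) (hy : 0 < y) :
    Summable (fun n : ℤ => (-1 : ℝ)^n * Real.exp (-Real.pi * (n : ℝ)^2 * y)) := by
  have h : Summable (fun n : ℤ => jacobiTheta₂_term n (1/2) (I*y)) := by
    rw [summable_jacobiTheta₂_term_iff]
    simpa using hy
  simp_rw [term4] at h
  rwa [Complex.summable_ofReal] at h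

lemma sum3 (y : ℝ) (hy : 0 < y) :
    Summable (fun n : ℤ => Real.exp (-Real.pi * (n : ℝ)^2 * y)) := by
  have := (sum4 y hy).abs
  refine this.congr fun x => ?_
  rw [abs_mul]
  rcases Int.even_or_odd x with h | h
  · rw [h.neg_one_zpow]; simp [Real.abs_exp]
  · rw [h.neg_one_zpow]; simp [Real.abs_exp]

lemma jt2 (y : ℝ) (hy : 0 < y) :
    jacobiTheta₂ (I*y/2) (I*y) = ((Real.exp (Real.pi*y/4) * θ₂ y : ℝ) : ℂ) := by
  rw [jacobiTheta₂, θ₂, ← tsum_mul_left, Complex.ofReal_tsum]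
  exact tsum_congr (term2 y)

lemma jt4 (y : ℝ) (hy : 0 < y) :
    jacobiTheta₂ (1/2) (I*y) = ((θ₄ y : ℝ) : ℂ) := by
  rw [jacobiTheta₂, θ₄, Complex.ofReal_tsum]
  exact tsum_congr (term4 y)

lemma key (y : ℝ) (hy : 0 < y) : θ₂ (1/y) = Real.sqrt y * θ₄ y := by
  have hy0 : (y:ℂ) ≠ 0 := Complex.ofReal_ne_zero.mpr hy.ne'
  have hy' : 0 < 1/y := by positivity
  have h := jacobiTheta₂_functional_equation (1/2) (I*y)
  have e1 : ((1:ℂ)/2)/(I*(y:ℂ)) = -(I*((1/y : ℝ):ℂ)/2) := by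
    push_cast
    rw [div_eq_iff (by simp [hy0, Complex.I_ne_zero] : I*(y:ℂ) ≠ 0)]
    field_simp
    linear_combination Complex.I_sq
  have e2 : (-1:ℂ)/(I*(y:ℂ)) = I*((1/y : ℝ):ℂ) := by
    push_cast
    rw [div_eq_iff (by simp [hy0, Complex.I_ne_zero] : I*(y:ℂ) ≠ 0)]
    field_simp
    linear_combination -Complex.I_sq
  have e3 : -I*(I*(y:ℂ)) = (y:ℂ) := by
    rw [neg_mul, ← mul_assoc, Complex.I_mul_I]; ring
  have e4 : (-(Real.pi:ℂ) * I * (1/2)^2 / (I*(y:ℂ))) = ((-Real.pi/(4*y) : ℝ) : ℂ) := by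
    push_cast
    rw [div_eq_div_iff (by simp [hy0, Complex.I_ne_zero]) (by push_cast; simp [hy0])]
    ring
  have e5 : ((y:ℂ)) ^ (1/2 : ℂ) = ((Real.sqrt y : ℝ) : ℂ) := by
    rw [show (1/2 : ℂ) = ((1/2 : ℝ) : ℂ) by norm_num,
      ← Complex.ofReal_cpow hy.le, Real.sqrt_eq_rpow]
  rw [jt4 y hy, e1, e2, e3, e4, e5, jacobiTheta₂_neg_left, jt2 (1/y) hy',
    ← Complex.ofReal_exp,
    show (1:ℂ)/((Real.sqrt y : ℝ):ℂ) = ((1/Real.sqrt y : ℝ):ℂ) by push_cast; ring,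
    ← Complex.ofReal_mul, ← Complex.ofReal_mul, Complex.ofReal_inj] at h
  have hs : (0:ℝ) < Real.sqrt y := Real.sqrt_pos.mpr hy
  have hexp : Real.exp (-Real.pi/(4*y)) * (Real.exp (Real.pi*(1/y)/4) * θ₂ (1/y)) = θ₂ (1/y) := by
    rw [← mul_assoc, ← Real.exp_add,
      show -Real.pi/(4*y) + Real.pi*(1/y)/4 = 0 by field_simp; ring,
      Real.exp_zero, one_mul]
  rw [mul_assoc, hexp] at h
  rw [h]
  field_simp

lemma mono_pair (y : ℝ) (hy : 1 < y) :
    AntitoneOn (fun a => Real.exp (-Real.pi*a*1) - Real.exp (-Real.pi*a*y)) (Set.Ici 1) := by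
  have hπ := Real.pi_gt_three
  have hd : ∀ a : ℝ, HasDerivAt (fun a => Real.exp (-Real.pi*a*1) - Real.exp (-Real.pi*a*y))
      (Real.exp (-Real.pi*a*1) * (-Real.pi*1) - Real.exp (-Real.pi*a*y) * (-Real.pi*y)) a := by
    intro a
    have h1 : HasDerivAt (fun a : ℝ => -Real.pi*a*1) (-Real.pi*1) a := by
      simpa using (((hasDerivAt_id a).const_mul (-Real.pi)).mul_const 1)
    have h2 : HasDerivAt (fun a : ℝ => -Real.pi*a*y) (-Real.pi*y) a := by
      simpa using (((hasDerivAt_id a).const_mul (-Real.pi)).mul_const y)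
    exact h1.exp.sub h2.exp
  apply antitoneOn_of_deriv_nonpos (convex_Ici 1)
  · exact Continuous.continuousOn (by fun_prop)
  · intro x hx
    exact (hd x).differentiableAt.differentiableWithinAt
  · intro x hx
    rw [interior_Ici] at hx
    have hx1 : (1:ℝ) < x := hx
    rw [(hd x).deriv]
    have h1 : y ≤ Real.exp (Real.pi*x*(y-1)) := by
      have h0 := Real.add_one_le_exp (Real.pi*x*(y-1))
      nlinarith [mul_nonneg (sub_nonneg.mpr hy.le) (by nlinarith : (0:ℝ) ≤ Real.pi*x - 1)]
    have key : y * Real.exp (-Real.pi*x*y) ≤ Real.exp (-Real.pi*x*1) := by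
      calc y * Real.exp (-Real.pi*x*y)
          ≤ Real.exp (Real.pi*x*(y-1)) * Real.exp (-Real.pi*x*y) :=
            mul_le_mul_of_nonneg_right h1 (Real.exp_nonneg _)
        _ = Real.exp (-Real.pi*x*1) := by rw [← Real.exp_add]; ring_nf
    nlinarith [mul_le_mul_of_nonneg_left key Real.pi_pos.le]

lemma pair_le (y : ℝ) (hy : 1 < y) {a b : ℝ} (ha : 1 ≤ a) (hab : a ≤ b) :
    Real.exp (-Real.pi*b*1) - Real.exp (-Real.pi*b*y)
      ≤ Real.exp (-Real.pi*a*1) - Real.exp (-Real.pi*a*y) :=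
  mono_pair y hy ha (ha.trans hab) hab

lemma g2nonneg (y : ℝ) (hy : 1 ≤ y) (c : ℤ) :
    0 ≤ Real.exp (-Real.pi*((c:ℝ)+1/2)^2*1) - Real.exp (-Real.pi*((c:ℝ)+1/2)^2*y) := by
  rw [sub_nonneg, Real.exp_le_exp]
  nlinarith [mul_nonneg (mul_nonneg Real.pi_pos.le (sq_nonneg ((c:ℝ)+1/2))) (sub_nonneg.mpr hy)]

lemma g3nonneg (y : ℝ) (hy : 1 ≤ y) (c : ℤ) :
    0 ≤ Real.exp (-Real.pi*(c:ℝ)^2*1) - Real.exp (-Real.pi*(c:ℝ)^2*y) := by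
  rw [sub_nonneg, Real.exp_le_exp]
  nlinarith [mul_nonneg (mul_nonneg Real.pi_pos.le (sq_nonneg ((c:ℝ)))) (sub_nonneg.mpr hy)]

lemma sum_ineq (y : ℝ) (hy : 1 < y) :
    (∑' n : ℤ, ((-1:ℝ)^n * Real.exp (-Real.pi*(n:ℝ)^2*1) - (-1:ℝ)^n * Real.exp (-Real.pi*(n:ℝ)^2*y)))
      + (Real.exp (-Real.pi*((1:ℤ):ℝ)^2*1) - Real.exp (-Real.pi*((1:ℤ):ℝ)^2*y))
    ≤ ∑' n : ℤ, (Real.exp (-Real.pi*((n:ℝ)+1/2)^2*1) - Real.exp (-Real.pi*((n:ℝ)+1/2)^2*y)) := by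
  have hy0 : (0:ℝ) < y := lt_trans one_pos hy
  have s41 := sum4 1 one_pos
  have s4y := sum4 y hy0
  set d : ℝ := Real.exp (-Real.pi*((1:ℤ):ℝ)^2*1) - Real.exp (-Real.pi*((1:ℤ):ℝ)^2*y) with hd
  have sInd : Summable (fun n : ℤ => if n = 1 then d else 0) := by
    apply summable_of_ne_finset_zero (s := ({1} : Finset ℤ))
    intro b hb
    simp only [Finset.mem_singleton] at hb
    simp [hb]
  rw [← tsum_ite_eq (1:ℤ) (fun _ => d), ← Summable.tsum_add (s41.sub s4y) sInd]
  refine Summable.tsum_le_tsum_of_inj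
    (fun n => if n % 2 = 0 then (if 0 < n then n - 1 else n) else (if 0 < n then n + 1 else n))
    ?_ ?_ ?_ ((s41.sub s4y).add sInd) ((sum2 1 one_pos).sub (sum2 y hy0))
  · intro a b hab
    simp only at hab
    split_ifs at hab <;> omega
  · intro c _
    exact g2nonneg y hy.le c
  · intro n
    rcases Int.emod_two_eq n with hmod | hmod
    · -- n even
      have heven : Even n := Int.even_iff.mpr hmod
      have hne : n ≠ 1 := by omega
      rw [if_pos hmod, heven.neg_one_zpow, one_mul, one_mul, if_neg hne, add_zero]
      rcases lt_trichotomy 0 n with hpos | hzero | hneg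
      · rw [if_pos hpos]
        have h2n : (2:ℤ) ≤ n := by omega
        have h2n' : (2:ℝ) ≤ (n:ℝ) := by exact_mod_cast h2n
        push_cast
        have h1 : (1:ℝ) ≤ ((n:ℝ) - 1 + 1/2)^2 := by nlinarith
        have h2 : ((n:ℝ) - 1 + 1/2)^2 ≤ ((n:ℝ))^2 := by nlinarith
        exact pair_le y hy h1 h2
      · rw [if_neg (show ¬(0:ℤ) < n by omega)]
        subst hzero
        norm_num
        nlinarith [Real.pi_pos]
      · rw [if_neg (show ¬(0:ℤ) < n by omega)]
        have h2n : n ≤ (-2:ℤ) := by omega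
        have h2n' : (n:ℝ) ≤ -2 := by exact_mod_cast h2n
        have h1 : (1:ℝ) ≤ ((n:ℝ) + 1/2)^2 := by nlinarith
        have h2 : ((n:ℝ) + 1/2)^2 ≤ ((n:ℝ))^2 := by nlinarith
        exact pair_le y hy h1 h2
    · -- n odd
      have hodd : Odd n := Int.odd_iff.mpr hmod
      rw [if_neg (show ¬(n % 2 = 0) by omega), hodd.neg_one_zpow]
      have hg2 := g2nonneg y hy.le (if 0 < n then n + 1 else n)
      have hg3 := g3nonneg y hy.le n
      rcases eq_or_ne n 1 with rfl | hne
      · rw [if_pos rfl, hd, if_pos (show (0:ℤ) < 1 by norm_num)]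
        rw [if_pos (show (0:ℤ) < 1 by norm_num)] at hg2
        push_cast at hg2 ⊢
        linarith
      · rw [if_neg hne, add_zero]
        split_ifs at hg2 ⊢ <;> linarith

lemma lt24 (y : ℝ) (hy : 1 < y) : θ₂ y < θ₄ y := by
  have hy0 : (0:ℝ) < y := lt_trans one_pos hy
  have h11 : θ₂ 1 = θ₄ 1 := by simpa using key 1 one_pos
  have h2 : θ₂ 1 - θ₂ y
      = ∑' n : ℤ, (Real.exp (-Real.pi*((n:ℝ)+1/2)^2*1) - Real.exp (-Real.pi*((n:ℝ)+1/2)^2*y)) :=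
    (Summable.tsum_sub (sum2 1 one_pos) (sum2 y hy0)).symm
  have h4 : θ₄ 1 - θ₄ y
      = ∑' n : ℤ, ((-1:ℝ)^n * Real.exp (-Real.pi*(n:ℝ)^2*1) - (-1:ℝ)^n * Real.exp (-Real.pi*(n:ℝ)^2*y)) :=
    (Summable.tsum_sub (sum4 1 one_pos) (sum4 y hy0)).symm
  have hs := sum_ineq y hy
  have hpos : 0 < Real.exp (-Real.pi*((1:ℤ):ℝ)^2*1) - Real.exp (-Real.pi*((1:ℤ):ℝ)^2*y) := by
    rw [sub_pos, Real.exp_lt_exp]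
    push_cast
    nlinarith [Real.pi_pos]
  have hcomb : (θ₄ 1 - θ₄ y)
      + (Real.exp (-Real.pi*((1:ℤ):ℝ)^2*1) - Real.exp (-Real.pi*((1:ℤ):ℝ)^2*y))
      ≤ θ₂ 1 - θ₂ y := by
    rw [h2, h4]
    exact hs
  linarith

end Aux

/-- For y > 0, θ₂(y) = θ₄(y) if and only if y = 1. -/
theorem theta2_eq_theta4_iff (y : ℝ) (hy : 0 < y) : θ₂ y = θ₄ y ↔ y = 1 := by
  constructor
  · intro h
    rcases lt_trichotomy y 1 with hlt | heq | hgt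
    · exfalso
      have h1y : 1 < 1/y := one_lt_one_div hy hlt
      have hk := key (1/y) (by positivity)
      rw [one_div_one_div] at hk
      have hkk := key y hy
      have hlt24 := lt24 (1/y) h1y
      have hs0 : (0:ℝ) < Real.sqrt y := Real.sqrt_pos.mpr hy
      have hsq : Real.sqrt (1/y) = (Real.sqrt y)⁻¹ := by rw [one_div, Real.sqrt_inv]
      rw [hsq] at hk
      have h4' : θ₄ (1/y) = Real.sqrt y * θ₂ y := by
        rw [hk]
        field_simp
      rw [hkk, h4', h] at hlt24
      exact lt_irrefl _ hlt24
    · exact heq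
    · exact absurd h (ne_of_lt (lt24 y hgt))
  · rintro rfl
    simpa using key 1 one_pos
end

section
/- Let p be an odd prime and let A ∈ Mₙ(ℚ) be a symmetric matrix all of whose entries have p-adic valuation ≥ 0 (i.e., entries lie in the localization ℤ₍ₚ₎ of ℤ at p), and suppose the p-adic valuation of det A is 0 (p divides neither the numerator nor denominator of det A). Then there exists a matrix S ∈ Mₙ(ℚ) all of whose entries have p-adic valuation ≥ 0, with det S = 1 or det S = −1, such that Sᵀ·A·S is a diagonal matrix diag(a₁, …, aₙ) in which every diagonal entry aᵢ has p-adic valuation exactly 0 (i.e., each aᵢ is a unit of ℤ₍ₚ₎). -/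
open Matrix


section
variable {p : ℕ}

def Pv (p : ℕ) (q : ℚ) : Prop := ¬ (p ∣ q.den)
def Uv (p : ℕ) (q : ℚ) : Prop := ¬ (p ∣ q.den) ∧ ¬ ((p:ℤ) ∣ q.num)

lemma rat_cross {q : ℚ} {N D : ℤ} (hD : D ≠ 0) (h : q = (N : ℚ) / D) :
    q.num * D = N * q.den := by
  have hq : (q.num : ℚ) / (q.den : ℚ) = (N : ℚ) / D := by rw [Rat.num_div_den]; exact h
  rw [div_eq_div_iff (by exact_mod_cast q.den_ne_zero) (by exact_mod_cast hD)] at hq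
  exact_mod_cast hq

lemma not_both (hp : p.Prime) (q : ℚ) (h1 : (p:ℤ) ∣ q.num) (h2 : p ∣ q.den) : False := by
  have h1' : p ∣ q.num.natAbs := by simpa using Int.natAbs_dvd_natAbs.mpr h1
  have := Nat.dvd_gcd h1' h2
  rw [q.reduced] at this
  exact hp.one_lt.ne' (Nat.dvd_one.mp this)

lemma pv_of_div (hp : p.Prime) {q : ℚ} {N D : ℤ} (hD : D ≠ 0) (h : q = (N : ℚ) / D)
    (hpD : ¬ ((p:ℤ) ∣ D)) : Pv p q := by
  intro hden
  have hc := rat_cross hD h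
  have hdvd : (p:ℤ) ∣ q.num * D := by
    rw [hc]; exact Dvd.dvd.mul_left (Int.natCast_dvd_natCast.mpr hden) N
  rcases (Int.Prime.dvd_mul' hp hdvd) with h' | h'
  · exact not_both hp q h' hden
  · exact hpD h'

lemma num_not_dvd_of_div (hp : p.Prime) {q : ℚ} {N D : ℤ} (hD : D ≠ 0) (h : q = (N : ℚ) / D)
    (hpN : ¬ ((p:ℤ) ∣ N)) : ¬ ((p:ℤ) ∣ q.num) := by
  intro hnum
  have hc := rat_cross hD h
  have hdvd : (p:ℤ) ∣ N * q.den := by rw [← hc]; exact Dvd.dvd.mul_right hnum D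
  rcases (Int.Prime.dvd_mul' hp hdvd) with h' | h'
  · exact hpN h'
  · exact not_both hp q hnum (Int.natCast_dvd_natCast.mp h')

lemma num_dvd_of_div (hp : p.Prime) {q : ℚ} {N D : ℤ} (hD : D ≠ 0) (h : q = (N : ℚ) / D)
    (hpN : (p:ℤ) ∣ N) (hpD : ¬ ((p:ℤ) ∣ D)) : (p:ℤ) ∣ q.num := by
  have hc := rat_cross hD h
  have hdvd : (p:ℤ) ∣ q.num * D := by rw [hc]; exact Dvd.dvd.mul_right hpN _
  rcases (Int.Prime.dvd_mul' hp hdvd) with h' | h'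
  · exact h'
  · exact absurd h' hpD

-- decompositions
lemma rat_add_decomp (a b : ℚ) :
    a + b = ((a.num * (b.den:ℤ) + b.num * (a.den:ℤ) : ℤ) : ℚ) / (((a.den:ℤ) * (b.den:ℤ) : ℤ) : ℚ) := by
  have da : (a.den : ℚ) ≠ 0 := by exact_mod_cast a.den_ne_zero
  have db : (b.den : ℚ) ≠ 0 := by exact_mod_cast b.den_ne_zero
  conv_lhs => rw [← Rat.num_div_den a, ← Rat.num_div_den b]
  rw [div_add_div _ _ da db]
  push_cast
  ring_nf

lemma rat_mul_decomp (a b : ℚ) :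
    a * b = ((a.num * b.num : ℤ) : ℚ) / (((a.den:ℤ) * (b.den:ℤ) : ℤ) : ℚ) := by
  conv_lhs => rw [← Rat.num_div_den a, ← Rat.num_div_den b]
  rw [div_mul_div_comm]
  push_cast
  ring_nf

lemma rat_inv_decomp (b : ℚ) : b⁻¹ = (((b.den:ℤ)) : ℚ) / ((b.num : ℤ) : ℚ) := by
  conv_lhs => rw [← Rat.num_div_den b]
  rw [inv_div]
  push_cast
  ring_nf

lemma pnat_not_dvd_mul (hp : p.Prime) {m n : ℕ} (hm : ¬ p ∣ m) (hn : ¬ p ∣ n) :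
    ¬ ((p:ℤ) ∣ ((m : ℤ) * (n : ℤ))) := by
  intro h
  rcases Int.Prime.dvd_mul' hp h with h' | h' <;>
    [exact hm (Int.natCast_dvd_natCast.mp h'); exact hn (Int.natCast_dvd_natCast.mp h')]

lemma den_pos_int (a : ℚ) : ((a.den : ℤ)) ≠ 0 := by exact_mod_cast a.den_ne_zero

lemma Pv.add (hp : p.Prime) {a b : ℚ} (ha : Pv p a) (hb : Pv p b) : Pv p (a + b) :=
  pv_of_div hp (mul_ne_zero (den_pos_int a) (den_pos_int b)) (rat_add_decomp a b)
    (pnat_not_dvd_mul hp ha hb)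

lemma Pv.mul (hp : p.Prime) {a b : ℚ} (ha : Pv p a) (hb : Pv p b) : Pv p (a * b) :=
  pv_of_div hp (mul_ne_zero (den_pos_int a) (den_pos_int b)) (rat_mul_decomp a b)
    (pnat_not_dvd_mul hp ha hb)

lemma Pv.intCast (hp : p.Prime) (z : ℤ) : Pv p (z : ℚ) := by
  intro h; rw [Rat.den_intCast] at h; exact hp.one_lt.ne' (Nat.dvd_one.mp h)

lemma Pv.zero (hp : p.Prime) : Pv p 0 := by simpa using Pv.intCast hp 0

lemma Pv.one (hp : p.Prime) : Pv p 1 := by simpa using Pv.intCast hp 1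

lemma Uv.ne_zero {q : ℚ} (h : Uv p q) : q ≠ 0 := by
  rintro rfl; exact h.2 (by simp)

lemma Uv.mul (hp : p.Prime) {a b : ℚ} (ha : Uv p a) (hb : Uv p b) : Uv p (a * b) :=
  ⟨Pv.mul hp ha.1 hb.1,
   num_not_dvd_of_div hp (mul_ne_zero (den_pos_int a) (den_pos_int b)) (rat_mul_decomp a b)
     (fun h => by rcases Int.Prime.dvd_mul' hp h with h' | h' <;> [exact ha.2 h'; exact hb.2 h'])⟩

lemma Uv.inv (hp : p.Prime) {b : ℚ} (hb : Uv p b) : Uv p b⁻¹ := by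
  have hnum : b.num ≠ 0 := Rat.num_ne_zero.mpr hb.ne_zero
  refine ⟨pv_of_div hp hnum (rat_inv_decomp b) hb.2,
    num_not_dvd_of_div hp hnum (rat_inv_decomp b)
      (fun h => hb.1 (Int.natCast_dvd_natCast.mp h))⟩

lemma num_dvd_add (hp : p.Prime) {a b : ℚ} (ha : Pv p a) (hb : Pv p b)
    (hna : (p:ℤ) ∣ a.num) (hnb : (p:ℤ) ∣ b.num) : (p:ℤ) ∣ (a + b).num := by
  refine num_dvd_of_div hp (mul_ne_zero (den_pos_int a) (den_pos_int b)) (rat_add_decomp a b)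
    ?_ (pnat_not_dvd_mul hp ha hb)
  exact dvd_add (hna.mul_right _) (hnb.mul_right _)

lemma num_dvd_mul (hp : p.Prime) {a b : ℚ} (ha : Pv p a) (hb : Pv p b)
    (hn : (p:ℤ) ∣ a.num ∨ (p:ℤ) ∣ b.num) : (p:ℤ) ∣ (a * b).num := by
  refine num_dvd_of_div hp (mul_ne_zero (den_pos_int a) (den_pos_int b)) (rat_mul_decomp a b)
    ?_ (pnat_not_dvd_mul hp ha hb)
  rcases hn with h | h
  · exact h.mul_right _
  · exact h.mul_left _

lemma unit_add_dvdnum (hp : p.Prime) {a b : ℚ} (ha : Pv p a) (hna : (p:ℤ) ∣ a.num)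
    (hb : Uv p b) : Uv p (a + b) := by
  refine ⟨Pv.add hp ha hb.1, ?_⟩
  refine num_not_dvd_of_div hp (mul_ne_zero (den_pos_int a) (den_pos_int b)) (rat_add_decomp a b) ?_
  intro h
  have h2 : (p:ℤ) ∣ b.num * (a.den:ℤ) := by
    have := dvd_sub h (hna.mul_right (b.den:ℤ))
    simpa using this
  rcases Int.Prime.dvd_mul' hp h2 with h' | h'
  · exact hb.2 h'
  · exact ha (Int.natCast_dvd_natCast.mp h')

lemma Pv.sum (hp : p.Prime) {ι : Type*} {s : Finset ι} {f : ι → ℚ}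
    (h : ∀ i ∈ s, Pv p (f i)) : Pv p (∑ i ∈ s, f i) := by
  classical
  induction s using Finset.induction_on with
  | empty => simpa using Pv.zero hp
  | insert _ _ hx ih =>
    rw [Finset.sum_insert hx]
    exact Pv.add hp (h _ (Finset.mem_insert_self _ _))
      (ih fun i hi => h i (Finset.mem_insert_of_mem hi))

lemma Pv.prod (hp : p.Prime) {ι : Type*} {s : Finset ι} {f : ι → ℚ}
    (h : ∀ i ∈ s, Pv p (f i)) : Pv p (∏ i ∈ s, f i) := by
  classical
  induction s using Finset.induction_on with
  | empty => simpa using Pv.one hp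
  | insert _ _ hx ih =>
    rw [Finset.prod_insert hx]
    exact Pv.mul hp (h _ (Finset.mem_insert_self _ _))
      (ih fun i hi => h i (Finset.mem_insert_of_mem hi))

lemma num_dvd_sum (hp : p.Prime) {ι : Type*} {s : Finset ι} {f : ι → ℚ}
    (h : ∀ i ∈ s, Pv p (f i)) (h2 : ∀ i ∈ s, (p:ℤ) ∣ (f i).num) :
    (p:ℤ) ∣ (∑ i ∈ s, f i).num := by
  classical
  induction s using Finset.induction_on with
  | empty => simp
  | insert _ _ hx ih =>
    rw [Finset.sum_insert hx]
    exact num_dvd_add hp (h _ (Finset.mem_insert_self _ _))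
      (Pv.sum hp fun i hi => h i (Finset.mem_insert_of_mem hi))
      (h2 _ (Finset.mem_insert_self _ _))
      (ih (fun i hi => h i (Finset.mem_insert_of_mem hi))
          (fun i hi => h2 i (Finset.mem_insert_of_mem hi)))

section Matrices
open Matrix
variable {ι : Type*} [Fintype ι] [DecidableEq ι]

lemma Pv.matmul (hp : p.Prime) {X Y : Matrix ι ι ℚ}
    (hX : ∀ i j, Pv p (X i j)) (hY : ∀ i j, Pv p (Y i j)) :
    ∀ i j, Pv p ((X * Y) i j) := by
  intro i j
  rw [Matrix.mul_apply]
  exact Pv.sum hp fun k _ => Pv.mul hp (hX i k) (hY k j)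

lemma Pv.transpose {X : Matrix ι ι ℚ} (hX : ∀ i j, Pv p (X i j)) :
    ∀ i j, Pv p (Xᵀ i j) := fun i j => hX j i

lemma Pv.det (hp : p.Prime) {X : Matrix ι ι ℚ} (hX : ∀ i j, Pv p (X i j)) :
    Pv p X.det := by
  rw [Matrix.det_apply]
  refine Pv.sum hp fun σ _ => ?_
  rw [Units.smul_def, zsmul_eq_mul]
  exact Pv.mul hp (Pv.intCast hp _) (Pv.prod hp fun i _ => hX _ _)

lemma num_dvd_det (hp : p.Prime) [Nonempty ι] {X : Matrix ι ι ℚ}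
    (hX : ∀ i j, Pv p (X i j)) (hn : ∀ i j, (p:ℤ) ∣ (X i j).num) :
    (p:ℤ) ∣ X.det.num := by
  rw [Matrix.det_apply]
  refine num_dvd_sum hp (fun σ _ => by
      rw [Units.smul_def, zsmul_eq_mul]
      exact Pv.mul hp (Pv.intCast hp _) (Pv.prod hp fun i _ => hX _ _)) ?_
  intro σ _
  rw [Units.smul_def, zsmul_eq_mul]
  refine num_dvd_mul hp (Pv.intCast hp _) (Pv.prod hp fun i _ => hX _ _) (Or.inr ?_)
  obtain ⟨i₀⟩ := ‹Nonempty ι›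
  rw [← Finset.prod_erase_mul _ _ (Finset.mem_univ i₀)]
  exact num_dvd_mul hp (Pv.prod hp fun i _ => hX _ _) (hX _ _) (Or.inr (hn _ _))

end Matrices
end

open Matrix

section Main
variable {p : ℕ}

lemma Pv.neg {q : ℚ} (h : Pv p q) : Pv p (-q) := by
  unfold Pv at *; rwa [Rat.den_neg_eq_den]

lemma Uv.two (hp : p.Prime) (hodd : p ≠ 2) : Uv p (2 : ℚ) := by
  constructor
  · show ¬ p ∣ (2:ℚ).den
    norm_num
    exact fun h => hp.one_lt.ne' h
  · show ¬ (p:ℤ) ∣ (2:ℚ).num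
    norm_num
    intro h
    have h2 : p ∣ 2 := by exact_mod_cast h
    exact hodd ((Nat.prime_dvd_prime_iff_eq hp Nat.prime_two).mp h2)

lemma IsSymm.conj {ι : Type*} [Fintype ι] {A T : Matrix ι ι ℚ} (h : A.IsSymm) :
    (Tᵀ * A * T).IsSymm := by
  unfold Matrix.IsSymm at *
  rw [Matrix.transpose_mul, Matrix.transpose_mul, Matrix.transpose_transpose, h,
    Matrix.mul_assoc]

theorem main_aux (hp : p.Prime) (hodd : p ≠ 2) :
    ∀ (N : ℕ) (ι : Type) (_ : Fintype ι) (_ : DecidableEq ι), Fintype.card ι = N →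
    ∀ (A : Matrix ι ι ℚ), A.IsSymm → (∀ i j, Pv p (A i j)) → Uv p A.det →
    ∃ S : Matrix ι ι ℚ, (∀ i j, Pv p (S i j)) ∧ (S.det = 1 ∨ S.det = -1) ∧
      ∃ d : ι → ℚ, Sᵀ * A * S = Matrix.diagonal d ∧ ∀ i, Uv p (d i) := by
  intro N
  induction N with
  | zero =>
    intro ι _ _ hcard A _ _ _
    haveI : IsEmpty ι := Fintype.card_eq_zero_iff.mp hcard
    refine ⟨1, fun i _ => isEmptyElim i, Or.inl Matrix.det_one, fun _ => 1, ?_, fun i => isEmptyElim i⟩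
    ext i j; exact isEmptyElim i
  | succ N ih =>
    intro ι _ _ hcard A hsymm hent hdet
    haveI hne : Nonempty ι := Fintype.card_pos_iff.mp (by omega)
    classical
    -- Step 1: find T₀ with det 1, Pv entries, and a unit diagonal entry of T₀ᵀ * A * T₀
    obtain ⟨T₀, hT₀pv, hT₀det, k, hBkk⟩ :
        ∃ T₀ : Matrix ι ι ℚ, (∀ i j, Pv p (T₀ i j)) ∧ T₀.det = 1 ∧
          ∃ k, Uv p ((T₀ᵀ * A * T₀) k k) := by
      by_cases hdiag : ∃ k, ¬ ((p:ℤ) ∣ (A k k).num)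
      · obtain ⟨k, hk⟩ := hdiag
        refine ⟨1, ?_, Matrix.det_one, k, ?_⟩
        · intro i j
          by_cases h : i = j <;> simp [Matrix.one_apply, h, Pv.one hp, Pv.zero hp]
        · simp only [Matrix.transpose_one, Matrix.mul_one, Matrix.one_mul]
          exact ⟨hent k k, hk⟩
      · push_neg at hdiag
        have hex : ∃ i j, ¬ ((p:ℤ) ∣ (A i j).num) := by
          by_contra h; push_neg at h
          exact hdet.2 (num_dvd_det hp hent h)
        obtain ⟨i, j, hij⟩ := hex
        have hne' : i ≠ j := by rintro rfl; exact hij (hdiag i)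
        refine ⟨Matrix.transvection j i 1, ?_, Matrix.det_transvection_of_ne j i hne'.symm 1, i, ?_⟩
        · intro a c
          have he : Matrix.transvection j i (1:ℚ) a c
              = (if a = c then 1 else 0) + (if j = a ∧ i = c then 1 else 0) := by
            simp [Matrix.transvection, Matrix.single, Matrix.one_apply]
          rw [he]
          refine Pv.add hp ?_ ?_ <;> split <;> first | exact Pv.one hp | exact Pv.zero hp
        · set T : Matrix ι ι ℚ := Matrix.transvection j i 1 with hT
          have htr : Tᵀ = Matrix.transvection i j 1 := by
            ext a c
            simp [hT, Matrix.transvection, Matrix.single, Matrix.one_apply,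
              Matrix.transpose_apply, and_comm, eq_comm]
          have hval : (Tᵀ * A * T) i i = (A i i + A j j) + 2 * A i j := by
            rw [htr, hT, Matrix.mul_assoc, Matrix.transvection_mul_apply_same,
              Matrix.mul_transvection_apply_same, Matrix.mul_transvection_apply_same]
            rw [hsymm.apply i j]
            ring
          rw [hval]
          exact unit_add_dvdnum hp
            (Pv.add hp (hent i i) (hent j j))
            (num_dvd_add hp (hent i i) (hent j j) (hdiag i) (hdiag j))
            (Uv.mul hp (Uv.two hp hodd) ⟨hent i j, hij⟩)
    -- Step 2: clear row and column k
    set B : Matrix ι ι ℚ := T₀ᵀ * A * T₀ with hB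
    have hBpv : ∀ i j, Pv p (B i j) :=
      Pv.matmul hp (Pv.matmul hp (Pv.transpose hT₀pv) hent) hT₀pv
    have hBsymm : B.IsSymm := IsSymm.conj hsymm
    have hBdet : B.det = A.det := by
      rw [hB, Matrix.det_mul, Matrix.det_mul, Matrix.det_transpose, hT₀det, one_mul, mul_one]
    set b : ℚ := B k k with hb
    have hbU : Uv p b := hBkk
    have hbne : b ≠ 0 := hbU.ne_zero
    set w : ι → ℚ := fun c => if c = k then 0 else -(B k c) / b with hw
    have hwk : w k = 0 := by simp [hw]
    have hwpv : ∀ c, Pv p (w c) := by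
      intro c
      rw [hw]
      dsimp only
      split
      · exact Pv.zero hp
      · rw [div_eq_mul_inv]
        exact Pv.mul hp (Pv.neg (hBpv k c)) (Uv.inv hp hbU).1
    set u : ι → ℚ := fun a => if a = k then 1 else 0 with hu
    set T₁ : Matrix ι ι ℚ := 1 + Matrix.replicateCol Unit u * Matrix.replicateRow Unit w with hT₁
    have hT₁app : ∀ a c, T₁ a c = (if a = c then 1 else 0) + (if a = k then w c else 0) := by
      intro a c
      rw [hT₁]
      simp [Matrix.add_apply, Matrix.mul_apply, Matrix.one_apply, hu, ite_mul, one_mul,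
        zero_mul, Matrix.replicateCol_apply, Matrix.replicateRow_apply]
    have hT₁det : T₁.det = 1 := by
      rw [hT₁, Matrix.det_one_add_replicateCol_mul_replicateRow]
      have h0 : w ⬝ᵥ u = 0 := by
        simp [dotProduct, hu, mul_ite, mul_one, mul_zero, Finset.sum_ite_eq', hwk]
      rw [h0, add_zero]
    have hT₁pv : ∀ a c, Pv p (T₁ a c) := by
      intro a c; rw [hT₁app]
      refine Pv.add hp ?_ ?_ <;> split <;>
        first | exact Pv.one hp | exact Pv.zero hp | exact hwpv c
    set C : Matrix ι ι ℚ := T₁ᵀ * B * T₁ with hC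
    have hBT : ∀ a c, (B * T₁) a c = B a c + B a k * w c := by
      intro a c
      rw [Matrix.mul_apply]
      have hterm : ∀ m, B a m * T₁ m c
          = (if m = c then B a m else 0) + (if m = k then B a m * w c else 0) := by
        intro m
        rw [hT₁app, mul_add]
        congr 1
        · split <;> simp
        · split <;> simp
      rw [Finset.sum_congr rfl (fun m _ => hterm m), Finset.sum_add_distrib,
        Finset.sum_ite_eq' Finset.univ c, Finset.sum_ite_eq' Finset.univ k]
      simp
    have hCapp : ∀ a c, C a c = B a c + B a k * w c + w a * (B k c + b * w c) := by
      intro a c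
      rw [hC, Matrix.mul_assoc, Matrix.mul_apply]
      have hterm : ∀ m, T₁ᵀ a m * (B * T₁) m c
          = (if m = a then (B * T₁) m c else 0) + (if m = k then w a * (B * T₁) m c else 0) := by
        intro m
        rw [Matrix.transpose_apply, hT₁app, add_mul]
        congr 1
        · split <;> simp
        · split <;> simp
      rw [Finset.sum_congr rfl (fun m _ => hterm m), Finset.sum_add_distrib,
        Finset.sum_ite_eq' Finset.univ a, Finset.sum_ite_eq' Finset.univ k]
      simp only [Finset.mem_univ, if_true, hBT]
      rfl
    have hCsymm : C.IsSymm := IsSymm.conj hBsymm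
    have hCpv : ∀ i j, Pv p (C i j) :=
      Pv.matmul hp (Pv.matmul hp (Pv.transpose hT₁pv) hBpv) hT₁pv
    have hCdet : C.det = B.det := by
      rw [hC, Matrix.det_mul, Matrix.det_mul, Matrix.det_transpose, hT₁det, one_mul, mul_one]
    have hCkk : C k k = b := by
      rw [hCapp, hwk, ← hb]; ring
    have hCrow : ∀ c, c ≠ k → C k c = 0 := by
      intro c hc
      rw [hCapp, hwk, hw]
      dsimp only
      rw [if_neg hc, hb]
      field_simp [show B k k ≠ 0 from hbne]
      ring
    have hCcol : ∀ a, a ≠ k → C a k = 0 := by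
      intro a ha
      rw [hCapp, hwk, hw]
      dsimp only
      rw [if_neg ha, hBsymm.apply a k, hb]
      field_simp [show B k k ≠ 0 from hbne]
      ring
    -- Step 3: the complementary block
    set e : {x : ι // x = k} ⊕ {x : ι // ¬ x = k} ≃ ι := Equiv.sumCompl (· = k) with he
    haveI : Unique {x : ι // x = k} := ⟨⟨⟨k, rfl⟩⟩, fun x => Subtype.ext x.2⟩
    have hcard' : Fintype.card {x : ι // ¬ x = k} = N := by
      have h1 := Fintype.card_subtype_compl (fun x : ι => x = k)
      rw [Fintype.card_subtype_eq, hcard] at h1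
      rw [h1]
      omega
    set C' : Matrix {x : ι // ¬ x = k} {x : ι // ¬ x = k} ℚ :=
      Matrix.of (fun a c => C a.1 c.1) with hC'
    have hsubC : C.submatrix e e
        = Matrix.fromBlocks (Matrix.diagonal (fun _ => b)) 0 0 C' := by
      ext x y
      rcases x with x | x <;> rcases y with y | y
      · rcases x with ⟨x, rfl⟩
        rcases y with ⟨y, hy⟩
        rcases hy
        simp [he, Matrix.submatrix_apply, Equiv.sumCompl_apply_inl, hCkk,
          Matrix.fromBlocks_apply₁₁, Matrix.diagonal_apply_eq]
      · rcases x with ⟨x, rfl⟩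
        simp [he, Matrix.submatrix_apply, Equiv.sumCompl_apply_inl, Equiv.sumCompl_apply_inr,
          Matrix.fromBlocks_apply₁₂, hCrow y.1 y.2]
      · rcases y with ⟨y, rfl⟩
        simp [he, Matrix.submatrix_apply, Equiv.sumCompl_apply_inl, Equiv.sumCompl_apply_inr,
          Matrix.fromBlocks_apply₂₁, hCcol x.1 x.2]
      · simp [he, Matrix.submatrix_apply, Equiv.sumCompl_apply_inr,
          Matrix.fromBlocks_apply₂₂, hC']
    have hdetCb : C.det = b * C'.det := by
      rw [← Matrix.det_submatrix_equiv_self e C, hsubC, Matrix.det_fromBlocks_zero₂₁]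
      congr 1
      rw [Matrix.det_unique, Matrix.diagonal_apply_eq]
    have hC'symm : C'.IsSymm := Matrix.IsSymm.ext fun i j => hCsymm.apply i.1 j.1
    have hC'pv : ∀ i j, Pv p (C' i j) := fun i j => hCpv i.1 j.1
    have hC'detU : Uv p C'.det := by
      have h1 : C'.det = b⁻¹ * C.det := by rw [hdetCb]; field_simp
      rw [h1]
      refine Uv.mul hp (Uv.inv hp hbU) ?_
      rw [hCdet, hBdet]; exact hdet
    obtain ⟨S', hS'pv, hS'det, d', hd'eq, hd'U⟩ :=
      ih {x : ι // ¬ x = k} inferInstance inferInstance hcard' C' hC'symm hC'pv hC'detU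
    -- Step 4: assemble
    set S₂ : Matrix ι ι ℚ := (Matrix.fromBlocks 1 0 0 S').submatrix e.symm e.symm with hS₂
    have hsubS₂ : S₂.submatrix e e = Matrix.fromBlocks 1 0 0 S' := by
      rw [hS₂, Matrix.submatrix_submatrix]
      simp
    have hS₂pv : ∀ a c, Pv p (S₂ a c) := by
      intro a c
      rw [hS₂, Matrix.submatrix_apply]
      rcases hxa : e.symm a with x | x <;> rcases hyc : e.symm c with y | y <;>
        simp only [Matrix.fromBlocks_apply₁₁, Matrix.fromBlocks_apply₁₂,
          Matrix.fromBlocks_apply₂₁, Matrix.fromBlocks_apply₂₂, Matrix.zero_apply,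
          Matrix.one_apply]
      · split
        · exact Pv.one hp
        · exact Pv.zero hp
      · exact Pv.zero hp
      · exact Pv.zero hp
      · exact hS'pv x y
    have hS₂det : S₂.det = S'.det := by
      rw [← Matrix.det_submatrix_equiv_self e S₂, hsubS₂, Matrix.det_fromBlocks_zero₂₁,
        Matrix.det_one, one_mul]
    set d : ι → ℚ := fun x => if h : x = k then b else d' ⟨x, h⟩ with hd
    have hsubdiag : (Matrix.diagonal d).submatrix e e
        = Matrix.fromBlocks (Matrix.diagonal fun _ => b) 0 0 (Matrix.diagonal d') := by
      ext x y
      rcases x with x | x <;> rcases y with y | y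
      · rcases x with ⟨x, rfl⟩
        rcases y with ⟨y, hy⟩
        rcases hy
        simp [he, Matrix.submatrix_apply, Equiv.sumCompl_apply_inl, hd,
          Matrix.fromBlocks_apply₁₁, Matrix.diagonal_apply_eq]
      · rcases x with ⟨x, rfl⟩
        have hne2 : x ≠ y.1 := fun h => y.2 h.symm
        simp [he, Matrix.submatrix_apply, Equiv.sumCompl_apply_inl, Equiv.sumCompl_apply_inr,
          Matrix.fromBlocks_apply₁₂, Matrix.diagonal_apply_ne _ hne2]
      · rcases y with ⟨y, rfl⟩
        have hne2 : x.1 ≠ y := x.2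
        simp [he, Matrix.submatrix_apply, Equiv.sumCompl_apply_inl, Equiv.sumCompl_apply_inr,
          Matrix.fromBlocks_apply₂₁, Matrix.diagonal_apply_ne _ hne2]
      · by_cases hxy : x = y
        · subst hxy
          simp [he, Matrix.submatrix_apply, Equiv.sumCompl_apply_inr,
            Matrix.fromBlocks_apply₂₂, Matrix.diagonal_apply_eq, hd, x.2]
        · have hne2 : x.1 ≠ y.1 := fun h => hxy (Subtype.ext h)
          simp [he, Matrix.submatrix_apply, Equiv.sumCompl_apply_inr,
            Matrix.fromBlocks_apply₂₂, Matrix.diagonal_apply_ne _ hne2,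
            Matrix.diagonal_apply_ne _ hxy]
    have hfinal : S₂ᵀ * C * S₂ = Matrix.diagonal d := by
      apply Equiv.injective (Matrix.reindex e.symm e.symm)
      simp only [Matrix.reindex_apply, Equiv.symm_symm]
      rw [← Matrix.submatrix_mul_equiv (S₂ᵀ * C) S₂ e e e,
        ← Matrix.submatrix_mul_equiv S₂ᵀ C e e e, hsubdiag,
        ← Matrix.transpose_submatrix, hsubS₂, hsubC, Matrix.fromBlocks_transpose,
        Matrix.fromBlocks_multiply, Matrix.fromBlocks_multiply]
      simp [hd'eq, Matrix.transpose_one]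
    refine ⟨T₀ * T₁ * S₂, ?_, ?_, d, ?_, ?_⟩
    · exact Pv.matmul hp (Pv.matmul hp hT₀pv hT₁pv) hS₂pv
    · rw [Matrix.det_mul, Matrix.det_mul, hT₀det, hT₁det, hS₂det]
      rcases hS'det with h | h <;> [left; right] <;> rw [h] <;> ring
    · have hconj : (T₀ * T₁ * S₂)ᵀ * A * (T₀ * T₁ * S₂) = S₂ᵀ * C * S₂ := by
        rw [hC, hB]
        simp only [Matrix.transpose_mul, Matrix.mul_assoc]
      rw [hconj, hfinal]
    · intro x
      rw [hd]
      dsimp only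
      by_cases h : x = k
      · rw [dif_pos h]; exact hbU
      · rw [dif_neg h]; exact hd'U ⟨x, h⟩
end Main


/-- Let p be an odd prime and A a symmetric rational matrix whose entries lie in the
localization ℤ₍ₚ₎ (denominators prime to p) and whose determinant is a unit of ℤ₍ₚ₎ (p divides
neither numerator nor denominator of det A).  Then A can be diagonalized by a matrix S with
entries in ℤ₍ₚ₎ of determinant ±1, with all diagonal entries units of ℤ₍ₚ₎. -/
theorem diagonalize_over_Zp (p : ℕ) (hp : p.Prime) (hodd : p ≠ 2) (n : ℕ)
    (A : Matrix (Fin n) (Fin n) ℚ) (hsymm : A.IsSymm)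
    (hent : ∀ i j, ¬ (p ∣ (A i j).den))
    (hdet_den : ¬ (p ∣ A.det.den)) (hdet_num : ¬ ((p : ℤ) ∣ A.det.num)) :
    ∃ S : Matrix (Fin n) (Fin n) ℚ,
      (∀ i j, ¬ (p ∣ (S i j).den)) ∧
      (S.det = 1 ∨ S.det = -1) ∧
      ∃ d : Fin n → ℚ,
        Sᵀ * A * S = Matrix.diagonal d ∧
        ∀ i, ¬ (p ∣ (d i).den) ∧ ¬ ((p : ℤ) ∣ (d i).num) := by
  obtain ⟨S, hSpv, hSdet, d, hdiag, hdU⟩ :=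
    main_aux hp hodd n (Fin n) inferInstance inferInstance (Fintype.card_fin n) A hsymm hent
      ⟨hdet_den, hdet_num⟩
  exact ⟨S, hSpv, hSdet, d, hdiag, fun i => ⟨(hdU i).1, (hdU i).2⟩⟩
end
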